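/- The WSP (warm spare) gate failure probability for the spare unit B with primary A, given by F_B(t) = [αλ_B(e^{−t(λ_A+αλ_B)} − 1)]/(−λ_A − αλ_B) − λ_A[−(e^{−λ_B t} − 1)(λ_A + αλ_B) + λ_B e^{−t(λ_A+αλ_B)} − λ_B] / [(λ_A + αλ_B)(λ_B − λ_A − αλ_B)], is the integral over [0,t] of the density f_B(b) = αλ_B e^{−b(λ_A+αλ_B)} + [λ_Aλ_B/(λ_B − αλ_B − λ_A)](e^{−b(λ_A+αλ_B)} − e^{−λ_B b}). -/

import Mathlib

open Real

theorem wsp_spare_failure_prob (lA lB a t : ℝ)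
    (hlA : 0 < lA) (hlB : 0 < lB) (ha0 : 0 < a) (ha1 : a < 1)
    (hden : lB - a * lB - lA ≠ 0) (ht : 0 ≤ t) :
    (∫ b in (0:ℝ)..t,
        (a * lB * exp (-b * (lA + a * lB)) +
          (lA * lB / (lB - a * lB - lA)) * (exp (-b * (lA + a * lB)) - exp (-lB * b)))) =
      (a * lB * (exp (-t * (lA + a * lB)) - 1)) / (-lA - a * lB) -
        lA * (-(exp (-lB * t) - 1) * (lA + a * lB) + lB * exp (-t * (lA + a * lB)) - lB) /
          ((lA + a * lB) * (lB - lA - a * lB)) := by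
  set k : ℝ := lA + a * lB with hk
  have hk0 : k ≠ 0 := by positivity
  have hlB0 : lB ≠ 0 := ne_of_gt hlB
  set C : ℝ := lA * lB / (lB - a * lB - lA) with hC
  have key : (∫ b in (0:ℝ)..t,
      (a * lB * exp (-b * k) + C * (exp (-b * k) - exp (-lB * b)))) =
      (fun x : ℝ => a * lB * (exp (-x * k) / (-k)) +
        C * (exp (-x * k) / (-k) + exp (-lB * x) / lB)) t -
      (fun x : ℝ => a * lB * (exp (-x * k) / (-k)) +
        C * (exp (-x * k) / (-k) + exp (-lB * x) / lB)) 0 := by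
    apply intervalIntegral.integral_eq_sub_of_hasDerivAt
    · intro x hx
      have h1 : HasDerivAt (fun x : ℝ => exp (-x * k)) (exp (-x * k) * (-k)) x := by
        have h := (((hasDerivAt_id x).neg.mul_const k)).exp
        simpa using h
      have h2 : HasDerivAt (fun x : ℝ => exp (-lB * x)) (exp (-lB * x) * (-lB)) x := by
        have h := ((hasDerivAt_id x).const_mul (-lB)).exp
        simpa [mul_comm] using h
      have := ((h1.div_const (-k)).const_mul (a * lB)).add
        (((h1.div_const (-k)).add (h2.div_const lB)).const_mul C)
      convert this using 1
      · rfl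
      · rw [mul_div_assoc (rexp (-lB * x)), neg_div, div_self hlB0]
        simp only [mul_div_cancel_right₀ _ (neg_ne_zero.mpr hk0)]
        ring
    · apply Continuous.intervalIntegrable
      continuity
  rw [key]
  have hden' : (lA + a * lB) * (lB - lA - a * lB) ≠ 0 := by
    apply mul_ne_zero hk0
    intro h; apply hden; linarith [h]
  have hk0' : -lA - a * lB ≠ 0 := by intro h; apply hk0; rw [hk]; linarith
  have hk0'' : -(a * lB) - lA ≠ 0 := by intro h; apply hk0; rw [hk]; linarith
  simp only [hC]
  rw [hk] at *
  simp only [div_neg]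
  simp only [neg_mul, zero_mul, mul_zero, neg_zero, exp_zero]
  field_simp
  ring
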